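/- Let w be the facility location profile output by the (1, (3 − √5)/2)-Quantile mechanism on an instance. Then for every facility location profile o of that instance, AoM(w) ≤ (2 + √5) · AoM(o). In particular, the distortion of the (1, (3 − √5)/2)-Quantile mechanism under the Average-of-Max cost is at most 2 + √5. -/

import Mathlib

noncomputable section

/-- Max-variant individual cost of an agent at `x` under facility profile `w`. -/
def fcost (x : ℝ) (w : ℝ × ℝ) : ℝ := max |x - w.1| |x - w.2|

/-- `w` is a facility location profile for the candidate multiset `A`:
its first slot is an element of `A` and its second slot is an element of `A`
with one copy of the first slot removed. -/
def IsProfile (A : Multiset ℝ) (w : ℝ × ℝ) : Prop :=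
  w.1 ∈ A ∧ w.2 ∈ A.erase w.1

/-- Canonical closest element of the multiset `A` to `p` (ties broken to the smaller). -/
def closest (A : Multiset ℝ) (p : ℝ) : ℝ :=
  if h : A.toFinset.Nonempty then
    (A.toFinset.filter fun a => ∀ b ∈ A.toFinset, |p - a| ≤ |p - b|).min'
      (by
        obtain ⟨a, ha, hmin⟩ := A.toFinset.exists_min_image (fun a => |p - a|) h
        exact ⟨a, Finset.mem_filter.mpr ⟨ha, hmin⟩⟩)
  else 0

/-- The `⌈γ · |S|⌉`-th leftmost element of the multiset `S` (the leftmost when `γ = 0`). -/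
def qSel (S : Multiset ℝ) (γ : ℝ) : ℝ :=
  (S.sort (· ≤ ·)).getD (⌈γ * (Multiset.card S : ℝ)⌉.toNat - 1) 0

/-- Multiset of locations of the agents of group `d`. -/
def groupLocs {n k : ℕ} (group : Fin n → Fin k) (x : Fin n → ℝ) (d : Fin k) : Multiset ℝ :=
  ((Finset.univ.filter fun i => group i = d).val).map x

/-- The (α,β)-Quantile mechanism: for each group `d` the representatives are the two
candidate locations closest to the ⌈α·n_d⌉-th leftmost agent of the group, and the two
facilities are chosen among the representatives by the ⌈β·k⌉-th leftmost rule. -/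
def quantileMech (A : Multiset ℝ) (α β : ℝ) {n k : ℕ}
    (group : Fin n → Fin k) (x : Fin n → ℝ) : ℝ × ℝ :=
  let y1 : Fin k → ℝ := fun d => closest A (qSel (groupLocs group x d) α)
  let y2 : Fin k → ℝ := fun d => closest (A.erase (y1 d)) (qSel (groupLocs group x d) α)
  let w1 : ℝ := qSel (Finset.univ.val.map y1) β
  let w2 : ℝ := qSel (Finset.univ.val.map fun d => if y1 d = w1 then y2 d else y1 d) β
  (w1, w2)

/-- Average-of-Max cost. -/
def AoM {n k : ℕ} (group : Fin n → Fin k) (x : Fin n → ℝ) (w : ℝ × ℝ) : ℝ :=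
  (1 / (k : ℝ)) * ∑ d : Fin k, ⨆ i : {i : Fin n // group i = d}, fcost (x i.1) w

set_option maxHeartbeats 1000000

lemma qSel_spec (S : Multiset ℝ) (γ : ℝ) (j : ℕ) (hj : j = (⌈γ * (Multiset.card S : ℝ)⌉).toNat)
    (hj1 : 1 ≤ j) (hj2 : j ≤ Multiset.card S) :
    qSel S γ ∈ S ∧ j ≤ Multiset.card (S.filter (· ≤ qSel S γ)) ∧
      Multiset.card S + 1 - j ≤ Multiset.card (S.filter (qSel S γ ≤ ·)) := by
  classical
  set l := S.sort (· ≤ ·) with hl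
  have hlen : l.length = Multiset.card S := Multiset.length_sort _
  have hsort : l.SortedLE := List.Pairwise.sortedLE (Multiset.pairwise_sort ..)
  have hco : (l : Multiset ℝ) = S := Multiset.sort_eq _ _
  have hidx : j - 1 < l.length := by omega
  have hq : qSel S γ = l[j-1] := by
    rw [qSel, ← hj, ← hl]
    exact List.getD_eq_getElem l 0 hidx
  set v := qSel S γ with hv
  have hmem : v ∈ S := by
    rw [hq, ← hco]
    exact List.getElem_mem hidx
  refine ⟨hmem, ?_, ?_⟩
  · -- take j
    have hsub : (↑(l.take j) : Multiset ℝ) ≤ S := by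
      rw [← hco]; exact Multiset.coe_le.mpr (l.take_sublist j).subperm
    have hall : ∀ a ∈ (↑(l.take j) : Multiset ℝ), a ≤ v := by
      intro a ha
      rw [Multiset.mem_coe, List.mem_iff_getElem] at ha
      obtain ⟨i, hi, rfl⟩ := ha
      rw [List.getElem_take, hq]
      have hi' : i ≤ j - 1 := by
        have := hi; rw [List.length_take] at this; omega
      exact hsort.monotone_get (by simpa using hi')
    have h1 : (↑(l.take j) : Multiset ℝ) ≤ S.filter (· ≤ v) := by
      rw [Multiset.le_filter]
      exact ⟨hsub, hall⟩
    have := Multiset.card_le_card h1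
    simpa [List.length_take, hlen, min_eq_left hj2] using this
  · -- drop (j-1)
    have hsub : (↑(l.drop (j-1)) : Multiset ℝ) ≤ S := by
      rw [← hco]; exact Multiset.coe_le.mpr (l.drop_sublist (j-1)).subperm
    have hall : ∀ a ∈ (↑(l.drop (j-1)) : Multiset ℝ), v ≤ a := by
      intro a ha
      rw [Multiset.mem_coe, List.mem_iff_getElem] at ha
      obtain ⟨i, hi, rfl⟩ := ha
      rw [List.getElem_drop, hq]
      exact hsort.monotone_get (by simp)
    have h1 : (↑(l.drop (j-1)) : Multiset ℝ) ≤ S.filter (v ≤ ·) := by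
      rw [Multiset.le_filter]
      exact ⟨hsub, hall⟩
    have := Multiset.card_le_card h1
    simp only [Multiset.coe_card, List.length_drop, hlen] at this
    omega


lemma qSel_max (S : Multiset ℝ) (hS : 0 < Multiset.card S) :
    qSel S 1 ∈ S ∧ ∀ a ∈ S, a ≤ qSel S 1 := by
  classical
  have hj : Multiset.card S = (⌈(1:ℝ) * (Multiset.card S : ℝ)⌉).toNat := by
    simp
  obtain ⟨hm, hcard, -⟩ := qSel_spec S 1 (Multiset.card S) hj hS le_rfl
  refine ⟨hm, ?_⟩
  have heq : S.filter (· ≤ qSel S 1) = S :=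
    Multiset.eq_of_le_of_card_le (Multiset.filter_le _ _) hcard
  intro a ha
  rw [← heq] at ha
  exact (Multiset.mem_filter.mp ha).2


lemma closest_spec (A : Multiset ℝ) (p : ℝ) (hA : A ≠ 0) :
    closest A p ∈ A ∧ ∀ b ∈ A, |p - closest A p| ≤ |p - b| := by
  classical
  have h : A.toFinset.Nonempty := by
    obtain ⟨a, ha⟩ := Multiset.exists_mem_of_ne_zero hA
    exact ⟨a, Multiset.mem_toFinset.mpr ha⟩
  rw [closest, dif_pos h]
  set F := (A.toFinset.filter fun a => ∀ b ∈ A.toFinset, |p - a| ≤ |p - b|)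
  have hne : F.Nonempty := by
    obtain ⟨a, ha, hmin⟩ := A.toFinset.exists_min_image (fun a => |p - a|) h
    exact ⟨a, Finset.mem_filter.mpr ⟨ha, hmin⟩⟩
  have hmem := F.min'_mem hne
  have := Finset.mem_filter.mp hmem
  exact ⟨Multiset.mem_toFinset.mp this.1,
    fun b hb => this.2 b (Multiset.mem_toFinset.mpr hb)⟩


lemma fcost_mid_le (t : ℝ) (w : ℝ × ℝ) :
    |t - (w.1 + w.2)/2| + |w.1 - w.2|/2 ≤ fcost t w := by
  rcases le_total w.1 w.2 with h2 | h2 <;> rcases le_total t ((w.1 + w.2)/2) with h | h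
  · refine le_trans ?_ (le_max_right _ _)
    rw [abs_of_nonpos (by linarith), abs_of_nonpos (by linarith : w.1 - w.2 ≤ 0),
      abs_of_nonpos (by linarith : t - w.2 ≤ 0)]
    linarith
  · refine le_trans ?_ (le_max_left _ _)
    rw [abs_of_nonneg (by linarith), abs_of_nonpos (by linarith : w.1 - w.2 ≤ 0),
      abs_of_nonneg (by linarith : 0 ≤ t - w.1)]
    linarith
  · refine le_trans ?_ (le_max_left _ _)
    rw [abs_of_nonpos (by linarith), abs_of_nonneg (by linarith : 0 ≤ w.1 - w.2),
      abs_of_nonpos (by linarith : t - w.1 ≤ 0)]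
    linarith
  · refine le_trans ?_ (le_max_right _ _)
    rw [abs_of_nonneg (by linarith), abs_of_nonneg (by linarith : 0 ≤ w.1 - w.2),
      abs_of_nonneg (by linarith : 0 ≤ t - w.2)]
    linarith


lemma core (k : ℕ) (od md p : Fin k → ℝ) (mid δ wf wo : ℝ) (repf repo : Fin k → ℝ)
    (hδ : 0 ≤ δ)
    (hod : ∀ d, |p d - mid| + δ/2 ≤ od d)
    (hrf : ∀ d, |p d - repf d| ≤ |p d - mid| + δ/2)
    (hro : ∀ d, |p d - repo d| ≤ |p d - mid| + δ/2)
    (hT : |wo - mid| ≤ |wf - mid|)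
    (hmd1 : ∀ d, md d ≤ od d - δ/2 + |wf - mid|)
    (hmd2 : ∀ d, md d ≤ max (p d - mid + |wf - mid|) (od d - δ/2 + max (max wf wo - mid) 0))
    (hLf : (3 - Real.sqrt 5)/2 * k ≤ ((Finset.univ.filter fun d => repf d ≤ wf).card : ℝ))
    (hRf : (k : ℝ) - (3 - Real.sqrt 5)/2 * k ≤ ((Finset.univ.filter fun d => wf ≤ repf d).card : ℝ))
    (hRo : (k : ℝ) - (3 - Real.sqrt 5)/2 * k ≤ ((Finset.univ.filter fun d => wo ≤ repo d).card : ℝ)) :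
    ∑ d, md d ≤ (2 + Real.sqrt 5) * ∑ d, od d := by
  classical
  set s := Real.sqrt 5 with hs_def
  have hs : s^2 = 5 := Real.sq_sqrt (by norm_num)
  have hs0 : 0 ≤ s := Real.sqrt_nonneg 5
  have hs1 : 2 ≤ s := by nlinarith [hs, hs0]
  have hs3 : s ≤ 3 := by nlinarith [hs, hs0]
  set T := |wf - mid| with hT_def
  set c := max (max wf wo - mid) 0 with hc_def
  have hT0 : 0 ≤ T := abs_nonneg _
  have hc0 : 0 ≤ c := le_max_right _ _
  have hcT : c ≤ T := by
    refine max_le ?_ hT0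
    rcases max_choice wf wo with h | h <;> rw [h]
    · exact le_trans (le_abs_self _) le_rfl
    · exact le_trans (le_abs_self _) hT
  have hodd : ∀ d, δ/2 ≤ od d := fun d => by
    have := hod d; have := abs_nonneg (p d - mid); linarith
  have hodnn : ∀ d, 0 ≤ od d := fun d => le_trans (by linarith) (hodd d)
  have hsod0 : 0 ≤ ∑ d, od d := Finset.sum_nonneg fun d _ => hodnn d
  have hkey : (1+s)*((k:ℝ) - (3-s)/2*k) = 2*(k:ℝ) := by linear_combination ((k:ℝ)/2) * hs
  have hk0 : (0:ℝ) ≤ (k:ℝ) := Nat.cast_nonneg k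
  by_cases hTδ : T ≤ δ/2
  · have hmdo : ∀ d, md d ≤ od d := fun d => le_trans (hmd1 d) (by linarith)
    have h1 : ∑ d, md d ≤ ∑ d, od d := Finset.sum_le_sum fun d _ => hmdo d
    have h2 : 0 ≤ (1+s) * (∑ d, od d) := mul_nonneg (by linarith) hsod0
    nlinarith [h1, h2]
  push_neg at hTδ
  have hsum_gen : ∀ (E : Finset (Fin k)), ∑ d ∈ E, md d ≤ ∑ d ∈ E, od d + (E.card : ℝ) * (T - δ/2) := by
    intro E
    have h1 : ∑ d ∈ E, md d ≤ ∑ d ∈ E, (od d + (T - δ/2)) :=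
      Finset.sum_le_sum fun d _ => le_trans (hmd1 d) (by linarith)
    rw [Finset.sum_add_distrib, Finset.sum_const, nsmul_eq_mul] at h1
    exact h1
  rcases le_or_gt mid wf with hside | hside
  · -- far facility on the right
    have hTe : wf - mid = T := (abs_of_nonneg (by linarith)).symm
    set S := Finset.univ.filter (fun d => wf ≤ repf d) with hS_def
    have hodS : ∀ d ∈ S, T/2 + δ/4 ≤ od d := by
      intro d hd
      have hrep : wf ≤ repf d := (Finset.mem_filter.mp hd).2
      have h1 := hrf d; have h2 := hod d
      have h3 : repf d - p d ≤ |p d - repf d| := by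
        rw [abs_sub_comm]; exact le_abs_self _
      rcases abs_cases (p d - mid) with ⟨he, _⟩ | ⟨he, _⟩ <;> linarith
    have hcardS : (S.card : ℝ) * (T/2 + δ/4) ≤ ∑ d ∈ S, od d := by
      have := Finset.card_nsmul_le_sum S od (T/2 + δ/4) hodS
      rwa [nsmul_eq_mul] at this
    have hSle : ∑ d ∈ S, od d ≤ ∑ d, od d :=
      Finset.sum_le_sum_of_subset_of_nonneg (Finset.subset_univ S) fun i _ _ => hodnn i
    have ht1 : (0:ℝ) ≤ T/2 + δ/4 := by linarith
    have h4 : ((k:ℝ) - (3-s)/2*k) * (T/2+δ/4) ≤ (S.card:ℝ) * (T/2+δ/4) :=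
      mul_le_mul_of_nonneg_right hRf ht1
    have h5 : (1+s) * (((k:ℝ) - (3-s)/2*k) * (T/2+δ/4)) = 2*(k:ℝ)*(T/2+δ/4) := by
      rw [← mul_assoc, hkey]
    have h6 : (1+s) * (((k:ℝ) - (3-s)/2*k) * (T/2+δ/4)) ≤ (1+s) * (∑ d, od d) :=
      mul_le_mul_of_nonneg_left (le_trans h4 (le_trans hcardS hSle)) (by linarith)
    have h7 := hsum_gen Finset.univ
    rw [Finset.card_univ, Fintype.card_fin] at h7
    have hkd : 0 ≤ (k:ℝ) * δ := mul_nonneg hk0 hδ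
    linarith [h7, h6, h5, hkd]
  · -- far facility on the left
    have hTe : mid - wf = T := by
      rw [hT_def, abs_of_neg (by linarith : wf - mid < 0)]; ring
    set L := Finset.univ.filter (fun d => repf d ≤ wf) with hL_def
    have hLprop : ∀ d ∈ L, (T/2 + δ/4 ≤ od d) ∧ (p d - mid ≤ -((T - δ/2)/2)) := by
      intro d hd
      have hrep : repf d ≤ wf := (Finset.mem_filter.mp hd).2
      have h1 := hrf d; have h2 := hod d
      have h3 : p d - repf d ≤ |p d - repf d| := le_abs_self _
      rcases abs_cases (p d - mid) with ⟨he, _⟩ | ⟨he, _⟩ <;> constructor <;> linarith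
    have hmdL : ∀ d ∈ L, md d ≤ od d + c := by
      intro d hd
      refine le_trans (hmd2 d) (max_le ?_ (by linarith))
      have := (hLprop d hd).1; have := (hLprop d hd).2
      linarith
    have hcardL : (L.card : ℝ) * (T/2 + δ/4) ≤ ∑ d ∈ L, od d := by
      have := Finset.card_nsmul_le_sum L od (T/2 + δ/4) (fun d hd => (hLprop d hd).1)
      rwa [nsmul_eq_mul] at this
    have hsplit_md : ∑ d ∈ L, md d + ∑ d ∈ Finset.univ.filter (fun d => ¬ (repf d ≤ wf)), md d
        = ∑ d, md d := Finset.sum_filter_add_sum_filter_not _ _ _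
    have hsplit_od : ∑ d ∈ L, od d + ∑ d ∈ Finset.univ.filter (fun d => ¬ (repf d ≤ wf)), od d
        = ∑ d, od d := Finset.sum_filter_add_sum_filter_not _ _ _
    set Lc := Finset.univ.filter (fun d => ¬ (repf d ≤ wf)) with hLc_def
    have hcards : L.card + Lc.card = k := by
      rw [hL_def, hLc_def, Finset.card_filter_add_card_filter_not,
        Finset.card_univ, Fintype.card_fin]
    have hLk : (L.card : ℝ) ≤ (k:ℝ) := by
      have : L.card ≤ k := by omega
      exact_mod_cast this
    have hLcr : (Lc.card : ℝ) = (k:ℝ) - (L.card:ℝ) := by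
      have : (L.card:ℝ) + (Lc.card:ℝ) = (k:ℝ) := by exact_mod_cast hcards
      linarith
    have h8 : ∑ d ∈ L, md d ≤ ∑ d ∈ L, od d + (L.card:ℝ) * c := by
      have h1 : ∑ d ∈ L, md d ≤ ∑ d ∈ L, (od d + c) := Finset.sum_le_sum hmdL
      rw [Finset.sum_add_distrib, Finset.sum_const, nsmul_eq_mul] at h1
      exact h1
    have h9 := hsum_gen Lc
    set lam := (L.card : ℝ) with hlam
    have hlam0 : (0:ℝ) ≤ lam := Nat.cast_nonneg _
    have hlamB : (3-s)/2 * k ≤ lam := hLf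
    have hSLc0 : 0 ≤ ∑ d ∈ Lc, od d := Finset.sum_nonneg fun d _ => hodnn d
    have he1 : (3+s)/2 * ((3-s)/2*(k:ℝ)) = (k:ℝ) := by linear_combination (-(k:ℝ)/4) * hs
    have h10' := mul_le_mul_of_nonneg_left hlamB (show (0:ℝ) ≤ (3+s)/2 by linarith)
    have h10 : (k:ℝ) ≤ lam*(3+s)/2 := by linarith [he1, h10']
    have hTd : (0:ℝ) ≤ T - δ/2 := by linarith
    have A1 : ((k:ℝ) - lam)*(T-δ/2) ≤ ((1+s)*lam/2)*(T-δ/2) :=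
      mul_le_mul_of_nonneg_right (by linarith) hTd
    have A3 : (1+s)*(lam*(T/2+δ/4)) ≤ (1+s)*(∑ d ∈ L, od d) :=
      mul_le_mul_of_nonneg_left hcardL (by linarith)
    have A4 : 0 ≤ lam * δ := mul_nonneg hlam0 hδ
    have A4' : 0 ≤ s * (lam * δ) := mul_nonneg hs0 A4
    by_cases hcδ : c ≤ δ/2
    · have A2 : lam * c ≤ lam * (δ/2) := mul_le_mul_of_nonneg_left hcδ hlam0
      have hfin : ∑ d, md d ≤ ∑ d, od d + lam*c + ((k:ℝ)-lam)*(T-δ/2) := by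
        rw [← hsplit_md, ← hsplit_od]
        have := h9; rw [hLcr] at this
        linarith [h8, this]
      have hSLle : (1+s)*(∑ d ∈ L, od d) ≤ (1+s)*(∑ d, od d) := by
        apply mul_le_mul_of_nonneg_left _ (by linarith)
        rw [← hsplit_od]; linarith
      linarith [hfin, A1, A2, A3, A4', hSLle]
    · push_neg at hcδ
      have hwole : wf ≤ wo := by
        have : -(|wo - mid|) ≤ wo - mid := neg_abs_le _
        linarith [hT]
      have hbo : max wf wo = wo := max_eq_right hwole
      have hc_eq : c = wo - mid := by
        rcases max_choice (max wf wo - mid) 0 with h | h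
        · rw [hc_def, h, hbo]
        · exfalso; rw [hc_def] at hcδ; rw [h] at hcδ; linarith
      set Sb := Finset.univ.filter (fun d => wo ≤ repo d) with hSb_def
      have hSbprop : ∀ d ∈ Sb, (c/2 + δ/4 ≤ od d) ∧ ((c - δ/2)/2 ≤ p d - mid) := by
        intro d hd
        have hrep : wo ≤ repo d := (Finset.mem_filter.mp hd).2
        have h1 := hro d; have h2 := hod d
        have h3 : repo d - p d ≤ |p d - repo d| := by
          rw [abs_sub_comm]; exact le_abs_self _
        have hwoc : wo = mid + c := by linarith [hc_eq]
        rcases abs_cases (p d - mid) with ⟨he, _⟩ | ⟨he, _⟩ <;> constructor <;> linarith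
      have hdisj : Disjoint L Sb := by
        rw [Finset.disjoint_left]
        intro d hdL hdSb
        have := (hLprop d hdL).2
        have := (hSbprop d hdSb).2
        linarith
      have hcardSb : (Sb.card : ℝ) * (c/2 + δ/4) ≤ ∑ d ∈ Sb, od d := by
        have := Finset.card_nsmul_le_sum Sb od (c/2 + δ/4) (fun d hd => (hSbprop d hd).1)
        rwa [nsmul_eq_mul] at this
      have hsum_union : ∑ d ∈ L, od d + ∑ d ∈ Sb, od d ≤ ∑ d, od d := by
        rw [← Finset.sum_union hdisj]
        exact Finset.sum_le_sum_of_subset_of_nonneg (Finset.subset_univ _) fun i _ _ => hodnn i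
      have hc20 : (0:ℝ) ≤ c/2 := by linarith
      have B1 : lam * c ≤ (k:ℝ) * c := mul_le_mul_of_nonneg_right hLk hc0
      have B2 : (1+s)*(((k:ℝ) - (3-s)/2*k) * (c/2)) = (k:ℝ)*c := by
        rw [← mul_assoc, hkey]; ring
      have B3 : ((k:ℝ) - (3-s)/2*k)*(c/2) ≤ (Sb.card:ℝ)*(c/2) :=
        mul_le_mul_of_nonneg_right hRo hc20
      have B4 : (Sb.card:ℝ)*(c/2) ≤ (Sb.card:ℝ)*(c/2 + δ/4) :=
        mul_le_mul_of_nonneg_left (by linarith) (Nat.cast_nonneg _)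
      have B5 : (1+s)*(((k:ℝ) - (3-s)/2*k) * (c/2)) ≤ (1+s)*(∑ d ∈ Sb, od d) :=
        mul_le_mul_of_nonneg_left (le_trans B3 (le_trans B4 hcardSb)) (by linarith)
      have hfin : ∑ d, md d ≤ ∑ d, od d + lam*c + ((k:ℝ)-lam)*(T-δ/2) := by
        rw [← hsplit_md, ← hsplit_od]
        have := h9; rw [hLcr] at this
        linarith [h8, this]
      have hSLSb : (1+s)*((∑ d ∈ L, od d) + (∑ d ∈ Sb, od d)) ≤ (1+s)*(∑ d, od d) :=
        mul_le_mul_of_nonneg_left hsum_union (by linarith)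
      linarith [hfin, A1, A3, A4, A4', B1, B2, B5, hSLSb]


lemma count_card {k : ℕ} (rep : Fin k → ℝ) (P : ℝ → Prop) [DecidablePred P] :
    Multiset.card (Multiset.filter P (Finset.univ.val.map rep)) =
      (Finset.univ.filter (fun d => P (rep d))).card := by
  rw [Multiset.filter_map, Multiset.card_map]
  rfl

/-- For the Average-of-Max cost, the distortion of the (1,(3-√5)/2)-Quantile mechanism
is at most 2 + √5. -/
theorem quantileMech_AoM_distortion_golden
    (A : Multiset ℝ) (hA : 2 ≤ Multiset.card A)
    (n k : ℕ) (hn : 0 < n) (hk : 0 < k)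
    (group : Fin n → Fin k) (hgrp : ∀ d : Fin k, ∃ i : Fin n, group i = d)
    (x : Fin n → ℝ) (o : ℝ × ℝ) (ho : IsProfile A o) :
    AoM group x (quantileMech A 1 ((3 - Real.sqrt 5) / 2) group x) ≤
      (2 + Real.sqrt 5) * AoM group x o := by
  classical
  obtain ⟨ho1, ho2⟩ := ho
  have hs : (Real.sqrt 5)^2 = 5 := Real.sq_sqrt (by norm_num)
  have hs0 : 0 ≤ Real.sqrt 5 := Real.sqrt_nonneg 5
  have hs1 : 2 ≤ Real.sqrt 5 := by nlinarith [hs, hs0]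
  have hs3 : Real.sqrt 5 < 3 := by nlinarith [hs, hs0]
  set p : Fin k → ℝ := fun d => qSel (groupLocs group x d) 1 with hp_def
  set y1 : Fin k → ℝ := fun d => closest A (p d) with hy1_def
  set y2 : Fin k → ℝ := fun d => closest (A.erase (y1 d)) (p d) with hy2_def
  set w1 : ℝ := qSel (Finset.univ.val.map y1) ((3 - Real.sqrt 5) / 2) with hw1_def
  set z : Fin k → ℝ := fun d => if y1 d = w1 then y2 d else y1 d with hz_def
  set w2 : ℝ := qSel (Finset.univ.val.map z) ((3 - Real.sqrt 5) / 2) with hw2_def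
  have hmech : quantileMech A 1 ((3 - Real.sqrt 5) / 2) group x = (w1, w2) := rfl
  set od : Fin k → ℝ := fun d => ⨆ i : {i : Fin n // group i = d}, fcost (x i.1) o with hod_def
  set md : Fin k → ℝ := fun d => ⨆ i : {i : Fin n // group i = d}, fcost (x i.1) (w1, w2)
    with hmd_def
  suffices h : ∑ d, md d ≤ (2 + Real.sqrt 5) * ∑ d, od d by
    rw [hmech]
    show (1 / (k : ℝ)) * ∑ d, md d ≤ (2 + Real.sqrt 5) * ((1 / (k : ℝ)) * ∑ d, od d)
    have hk' : 0 ≤ 1/(k:ℝ) := by positivity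
    calc (1/(k:ℝ)) * ∑ d, md d ≤ (1/(k:ℝ)) * ((2 + Real.sqrt 5) * ∑ d, od d) :=
          mul_le_mul_of_nonneg_left h hk'
      _ = (2 + Real.sqrt 5) * ((1/(k:ℝ)) * ∑ d, od d) := by ring
  -- infrastructure
  have hne : ∀ d : Fin k, Nonempty {i : Fin n // group i = d} :=
    fun d => ⟨⟨(hgrp d).choose, (hgrp d).choose_spec⟩⟩
  have hbdd : ∀ (d : Fin k) (v : ℝ × ℝ),
      BddAbove (Set.range fun i : {i : Fin n // group i = d} => fcost (x i.1) v) :=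
    fun d v => (Set.finite_range _).bddAbove
  have h_le_od : ∀ (d : Fin k) (i : Fin n), group i = d → fcost (x i) o ≤ od d :=
    fun d i hi => le_ciSup (hbdd d o) (⟨i, hi⟩ : {i : Fin n // group i = d})
  have h_md_le : ∀ (d : Fin k) (B : ℝ),
      (∀ i : Fin n, group i = d → fcost (x i) (w1, w2) ≤ B) → md d ≤ B := by
    intro d B hB
    haveI := hne d
    exact ciSup_le fun i => hB i.1 i.2
  have hgl_card : ∀ d : Fin k, 0 < Multiset.card (groupLocs group x d) := by
    intro d
    obtain ⟨i, hi⟩ := hgrp d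
    rw [groupLocs, Multiset.card_map]
    have : i ∈ (Finset.univ.filter fun i => group i = d) := by simp [hi]
    exact Multiset.card_pos_iff_exists_mem.mpr ⟨i, this⟩
  have hp_mem : ∀ d : Fin k, ∃ i : Fin n, group i = d ∧ x i = p d := by
    intro d
    have hm := (qSel_max _ (hgl_card d)).1
    rw [groupLocs] at hm
    obtain ⟨i, hi, he⟩ := Multiset.mem_map.mp hm
    rw [Finset.mem_val, Finset.mem_filter] at hi
    exact ⟨i, hi.2, he⟩
  have hp_max : ∀ (d : Fin k) (i : Fin n), group i = d → x i ≤ p d := by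
    intro d i hi
    refine (qSel_max _ (hgl_card d)).2 (x i) ?_
    rw [groupLocs]
    exact Multiset.mem_map_of_mem _ (by simp [hi])
  set mid : ℝ := (o.1 + o.2)/2 with hmid_def
  set δ : ℝ := |o.1 - o.2| with hδ_def
  have hδ0 : 0 ≤ δ := abs_nonneg _
  have hmido1 : |mid - o.1| = δ/2 := by
    rw [hδ_def, show mid - o.1 = (o.2 - o.1)/2 by rw [hmid_def]; ring, abs_div,
      abs_sub_comm o.2 o.1]
    norm_num
  have hmido2 : |mid - o.2| = δ/2 := by
    rw [hδ_def, show mid - o.2 = (o.1 - o.2)/2 by rw [hmid_def]; ring, abs_div]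
    norm_num
  have hsp : ∀ (d : Fin k) (i : Fin n), group i = d → |x i - mid| + δ/2 ≤ od d := by
    intro d i hi
    have h1 := fcost_mid_le (x i) o
    have h2 := h_le_od d i hi
    rw [← hmid_def, ← hδ_def] at h1
    linarith
  have hod : ∀ d, |p d - mid| + δ/2 ≤ od d := by
    intro d
    obtain ⟨i, hi, hx⟩ := hp_mem d
    have := hsp d i hi
    rw [hx] at this
    exact this
  have hA0 : A ≠ 0 := by
    intro h0
    rw [h0] at hA
    simp at hA
  have hrf : ∀ d, |p d - y1 d| ≤ |p d - mid| + δ/2 := by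
    intro d
    have h1 : |p d - y1 d| ≤ |p d - o.1| := (closest_spec A (p d) hA0).2 o.1 ho1
    have h2 : |p d - o.1| ≤ |p d - mid| + |mid - o.1| := abs_sub_le _ _ _
    rw [hmido1] at h2
    linarith
  have hro : ∀ d, |p d - z d| ≤ |p d - mid| + δ/2 := by
    intro d
    by_cases hcase : y1 d = w1
    · have hz : z d = y2 d := by rw [hz_def]; simp [hcase]
      rw [hz]
      have hAe : A.erase (y1 d) ≠ 0 := by
        intro h0
        have hcd := Multiset.card_erase_of_mem (closest_spec A (p d) hA0).1
        rw [h0] at hcd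
        simp at hcd
        omega
      by_cases h1 : o.1 = y1 d
      · have ho2' : o.2 ∈ A.erase (y1 d) := by rw [← h1]; exact ho2
        have ha : |p d - y2 d| ≤ |p d - o.2| := (closest_spec _ (p d) hAe).2 o.2 ho2'
        have hb : |p d - o.2| ≤ |p d - mid| + |mid - o.2| := abs_sub_le _ _ _
        rw [hmido2] at hb
        linarith
      · have ho1' : o.1 ∈ A.erase (y1 d) := (Multiset.mem_erase_of_ne h1).mpr ho1
        have ha : |p d - y2 d| ≤ |p d - o.1| := (closest_spec _ (p d) hAe).2 o.1 ho1'
        have hb : |p d - o.1| ≤ |p d - mid| + |mid - o.1| := abs_sub_le _ _ _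
        rw [hmido1] at hb
        linarith
    · have hz : z d = y1 d := by rw [hz_def]; simp [hcase]
      rw [hz]
      exact hrf d
  -- md upper bounds
  set T : ℝ := max (|w1 - mid|) (|w2 - mid|) with hT_def
  have hmd1 : ∀ d, md d ≤ od d - δ/2 + T := by
    intro d
    apply h_md_le
    intro i hi
    have hspread := hsp d i hi
    have h1 : |x i - w1| ≤ |x i - mid| + |mid - w1| := abs_sub_le _ _ _
    have h2 : |x i - w2| ≤ |x i - mid| + |mid - w2| := abs_sub_le _ _ _
    have h3 : |mid - w1| ≤ T := by rw [abs_sub_comm]; exact le_max_left _ _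
    have h4 : |mid - w2| ≤ T := by rw [abs_sub_comm]; exact le_max_right _ _
    exact max_le (by linarith) (by linarith)
  set c : ℝ := max (max w1 w2 - mid) 0 with hc_def
  have hmd2 : ∀ d, md d ≤ max (p d - mid + T) (od d - δ/2 + c) := by
    intro d
    apply h_md_le
    intro i hi
    have hspread := hsp d i hi
    have hxp := hp_max d i hi
    have key : ∀ u : ℝ, mid - T ≤ u → u ≤ mid + c →
        |x i - u| ≤ max (p d - mid + T) (od d - δ/2 + c) := by
      intro u hu1 hu2
      rcases le_total (x i) u with h | h
      · rw [abs_of_nonpos (by linarith)]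
        refine le_max_of_le_right ?_
        have : |x i - mid| ≥ mid - x i := by
          rw [abs_sub_comm]; exact le_trans (le_abs_self _) le_rfl
        linarith
      · rw [abs_of_nonneg (by linarith)]
        exact le_max_of_le_left (by linarith)
    have hw1lo : mid - T ≤ w1 := by
      have : -(|w1 - mid|) ≤ w1 - mid := neg_abs_le _
      have : |w1 - mid| ≤ T := le_max_left _ _
      linarith [neg_abs_le (w1 - mid), le_max_left (|w1 - mid|) (|w2 - mid|)]
    have hw2lo : mid - T ≤ w2 := by
      linarith [neg_abs_le (w2 - mid), le_max_right (|w1 - mid|) (|w2 - mid|)]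
    have hw1hi : w1 ≤ mid + c := by
      have h1 : w1 - mid ≤ max w1 w2 - mid := by
        have := le_max_left w1 w2; linarith
      have h2 : max w1 w2 - mid ≤ c := le_max_left _ _
      linarith
    have hw2hi : w2 ≤ mid + c := by
      have h1 : w2 - mid ≤ max w1 w2 - mid := by
        have := le_max_right w1 w2; linarith
      have h2 : max w1 w2 - mid ≤ c := le_max_left _ _
      linarith
    exact max_le (key w1 hw1lo hw1hi) (key w2 hw2lo hw2hi)
  -- counting
  have hβ0 : 0 < (3 - Real.sqrt 5)/2 := by linarith
  have hβ1 : (3 - Real.sqrt 5)/2 ≤ 1 := by linarith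
  have hcount : ∀ rep : Fin k → ℝ,
      ((3 - Real.sqrt 5)/2 * (k:ℝ) ≤
        ((Finset.univ.filter fun d =>
          rep d ≤ qSel (Finset.univ.val.map rep) ((3 - Real.sqrt 5)/2)).card : ℝ)) ∧
      ((k:ℝ) - (3 - Real.sqrt 5)/2 * (k:ℝ) ≤
        ((Finset.univ.filter fun d =>
          qSel (Finset.univ.val.map rep) ((3 - Real.sqrt 5)/2) ≤ rep d).card : ℝ)) := by
    intro rep
    have hcardS : Multiset.card (Finset.univ.val.map rep) = k := by
      rw [Multiset.card_map]
      simp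
    have hβk0 : 0 < (3 - Real.sqrt 5)/2 * (k:ℝ) := by
      apply mul_pos hβ0
      exact_mod_cast hk
    set j : ℕ := (⌈(3 - Real.sqrt 5)/2 * (k:ℝ)⌉).toNat with hj_def
    have hceil_pos : 0 < ⌈(3 - Real.sqrt 5)/2 * (k:ℝ)⌉ := Int.ceil_pos.mpr hβk0
    have hj1 : 1 ≤ j := by rw [hj_def]; omega
    have hjk : j ≤ k := by
      rw [hj_def]
      have h1 : ⌈(3 - Real.sqrt 5)/2 * (k:ℝ)⌉ ≤ (k:ℤ) := by
        apply Int.ceil_le.mpr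
        push_cast
        nlinarith [Nat.cast_nonneg (α := ℝ) k]
      exact Int.toNat_le.mpr h1
    have hjreal : (j:ℝ) = ((⌈(3 - Real.sqrt 5)/2 * (k:ℝ)⌉ : ℤ) : ℝ) := by
      rw [hj_def]
      rw [show ((⌈(3 - Real.sqrt 5)/2 * (k:ℝ)⌉.toNat : ℕ) : ℝ)
          = ((⌈(3 - Real.sqrt 5)/2 * (k:ℝ)⌉.toNat : ℤ) : ℝ) from by push_cast; ring,
        Int.toNat_of_nonneg hceil_pos.le]
    have hjge : (3 - Real.sqrt 5)/2 * (k:ℝ) ≤ (j:ℝ) := by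
      rw [hjreal]; exact Int.le_ceil _
    have hjlt : (j:ℝ) < (3 - Real.sqrt 5)/2 * (k:ℝ) + 1 := by
      rw [hjreal]; exact Int.ceil_lt_add_one _
    obtain ⟨-, hc1, hc2⟩ := qSel_spec (Finset.univ.val.map rep) ((3 - Real.sqrt 5)/2) j
      (by rw [hcardS]) hj1 (by rw [hcardS]; exact hjk)
    rw [count_card rep (· ≤ qSel (Finset.univ.val.map rep) ((3 - Real.sqrt 5)/2))] at hc1
    rw [count_card rep (qSel (Finset.univ.val.map rep) ((3 - Real.sqrt 5)/2) ≤ ·)] at hc2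
    rw [hcardS] at hc2
    constructor
    · have : (j:ℝ) ≤ ((Finset.univ.filter fun d =>
          rep d ≤ qSel (Finset.univ.val.map rep) ((3 - Real.sqrt 5)/2)).card : ℝ) := by
        exact_mod_cast hc1
      linarith
    · have hcast : ((k + 1 - j : ℕ) : ℝ) = (k:ℝ) + 1 - (j:ℝ) := by
        have : j ≤ k + 1 := by omega
        push_cast [Nat.cast_sub this]
        ring
      have : ((k + 1 - j : ℕ) : ℝ) ≤ ((Finset.univ.filter fun d =>
          qSel (Finset.univ.val.map rep) ((3 - Real.sqrt 5)/2) ≤ rep d).card : ℝ) := by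
        exact_mod_cast hc2
      rw [hcast] at this
      linarith
  -- apply core
  rcases le_total (|w2 - mid|) (|w1 - mid|) with hcmp | hcmp
  · have hTmax : T = |w1 - mid| := max_eq_left hcmp
    refine core k od md p mid δ w1 w2 y1 z hδ0 hod hrf hro hcmp ?_ ?_
      (hcount y1).1 (hcount y1).2 (hcount z).2
    · intro d
      rw [← hTmax]
      exact hmd1 d
    · intro d
      rw [← hTmax]
      exact hmd2 d
  · have hTmax : T = |w2 - mid| := max_eq_right hcmp
    refine core k od md p mid δ w2 w1 z y1 hδ0 hod hro hrf hcmp ?_ ?_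
      (hcount z).1 (hcount z).2 (hcount y1).2
    · intro d
      rw [← hTmax]
      exact hmd1 d
    · intro d
      rw [max_comm w2 w1, ← hTmax]
      exact hmd2 d


end
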